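/- arXiv:1307.1126 — 4 statements merged into one kernel-verified Lean document; each statement's English description precedes it below -/
import Mathlib

section
/- For every integer n ≥ 2 and real z with -1 ≤ z < 0, L_{(n/2)+1}(z) > L_{n/2}(z), i.e. ∑_{m=1}^∞ z^{m-1}/m^{(n/2)+1} > ∑_{m=1}^∞ z^{m-1}/m^{n/2}. -/
open Real

/-- A tsum all of whose consecutive pairs are positive is positive. -/
lemma tsum_pos_of_pairs (E : ℕ → ℝ) (hE : Summable E)
    (h : ∀ k : ℕ, 0 < E (2 * k) + E (2 * k + 1)) : 0 < ∑' m, E m := by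
  have he : Summable (fun k => E (2 * k)) :=
    hE.comp_injective (fun a b hab => by omega)
  have ho : Summable (fun k => E (2 * k + 1)) :=
    hE.comp_injective (fun a b hab => by omega)
  rw [← tsum_even_add_odd he ho, ← Summable.tsum_add he ho]
  exact Summable.tsum_pos (he.add ho) (fun k => (h k).le) 0 (h 0)

/-- Summability of the L-series terms. -/
lemma summable_L (r : ℝ) (hr : 0 ≤ r) (z : ℝ) (hz : |z| ≤ 1) (h : |z| < 1 ∨ 1 < r) :
    Summable (fun m : ℕ => z ^ m / ((m : ℝ) + 1) ^ r) := by
  rcases h with h | h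
  · refine Summable.of_norm_bounded (g := fun m => |z| ^ m)
      (summable_geometric_of_lt_one (abs_nonneg z) h) (fun m => ?_)
    have hm : (0 : ℝ) < (m : ℝ) + 1 := by positivity
    have h1 : (1 : ℝ) ≤ ((m : ℝ) + 1) ^ r := Real.one_le_rpow (by linarith) hr
    rw [norm_div, norm_pow, Real.norm_eq_abs, Real.norm_eq_abs,
      abs_of_pos (show (0 : ℝ) < ((m : ℝ) + 1) ^ r by linarith)]
    exact div_le_self (by positivity) h1
  · refine Summable.of_norm_bounded (g := fun m : ℕ => ((m : ℝ) + 1) ^ (-r)) ?_ (fun m => ?_)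
    · have h1 : Summable (fun m : ℕ => ((m : ℝ)) ^ (-r)) :=
        Real.summable_nat_rpow.mpr (by linarith)
      have h2 := (summable_nat_add_iff 1).mpr h1
      simpa using h2
    · have hm : (0 : ℝ) < (m : ℝ) + 1 := by positivity
      rw [norm_div, norm_pow, Real.norm_eq_abs, Real.norm_eq_abs,
        abs_of_pos (Real.rpow_pos_of_pos hm r)]
      show |z| ^ m / ((m : ℝ) + 1) ^ r ≤ ((m : ℝ) + 1) ^ (-r)
      rw [Real.rpow_neg hm.le, div_eq_mul_inv]
      exact mul_le_of_le_one_left (by positivity) (pow_le_one₀ (abs_nonneg z) hz)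

/-- Key numeric inequality: for `a ≥ 2` and `s ≥ 1`,
`a/(a+1)^(s+1) < (a-1)/a^(s+1)`. -/
lemma key_ineq (s a : ℝ) (hs : 1 ≤ s) (ha : 2 ≤ a) :
    a / (a + 1) ^ (s + 1) < (a - 1) / a ^ (s + 1) := by
  have ha0 : (0 : ℝ) < a := by linarith
  have ha1 : (0 : ℝ) < a + 1 := by linarith
  have hp1 : (0 : ℝ) < a ^ (s + 1) := Real.rpow_pos_of_pos ha0 _
  have hp2 : (0 : ℝ) < (a + 1) ^ (s + 1) := Real.rpow_pos_of_pos ha1 _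
  rw [div_lt_div_iff₀ hp2 hp1]
  have hsq : ∀ x : ℝ, x ^ (2 : ℝ) = x * x := fun x => by
    rw [show (2 : ℝ) = ((2 : ℕ) : ℝ) by norm_num, Real.rpow_natCast]; ring
  have e1 : a ^ (s + 1) = a ^ (s - 1) * (a * a) := by
    rw [show s + 1 = (s - 1) + 2 by ring, Real.rpow_add ha0, hsq]
  have e2 : (a + 1) ^ (s + 1) = (a + 1) ^ (s - 1) * ((a + 1) * (a + 1)) := by
    rw [show s + 1 = (s - 1) + 2 by ring, Real.rpow_add ha1, hsq]
  have h3 : a ^ (s - 1) ≤ (a + 1) ^ (s - 1) :=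
    Real.rpow_le_rpow ha0.le (by linarith) (by linarith)
  have h4 : 0 < a ^ (s - 1) := Real.rpow_pos_of_pos ha0 _
  have h5 : (0 : ℝ) ≤ (a - 1) * ((a + 1) * (a + 1)) := by nlinarith
  rw [e1, e2]
  nlinarith [mul_le_mul_of_nonneg_left h3 h5,
    mul_pos (show (0 : ℝ) < a * a - a - 1 by nlinarith) h4]

/-- The pair comparison. -/
lemma pair_lt (s : ℝ) (hs : 1 ≤ s) (w : ℝ) (hw0 : 0 < w) (hw1 : w ≤ 1) (k : ℕ) :
    w ^ (2 * k + 2) * ((2 * (k : ℝ) + 2) / (2 * (k : ℝ) + 2 + 1) ^ (s + 1))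
      < w ^ (2 * k + 1) * ((2 * (k : ℝ) + 1) / (2 * (k : ℝ) + 1 + 1) ^ (s + 1)) := by
  have hk : (0 : ℝ) ≤ (k : ℝ) := Nat.cast_nonneg k
  have key := key_ineq s (2 * (k : ℝ) + 2) hs (by linarith)
  rw [show (2 * (k : ℝ) + 2) - 1 = 2 * (k : ℝ) + 1 + 1 - 1 by ring] at key
  have key2 : (2 * (k : ℝ) + 2) / (2 * (k : ℝ) + 2 + 1) ^ (s + 1)
      < (2 * (k : ℝ) + 1) / (2 * (k : ℝ) + 1 + 1) ^ (s + 1) := by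
    rw [show (2 * (k : ℝ) + 1 + 1) = 2 * (k : ℝ) + 2 by ring]
    convert key using 2 <;> ring
  have d2pos : 0 < (2 * (k : ℝ) + 2) / (2 * (k : ℝ) + 2 + 1) ^ (s + 1) := by
    have : (0:ℝ) < (2 * (k : ℝ) + 2 + 1) ^ (s + 1) := Real.rpow_pos_of_pos (by linarith) _
    positivity
  calc w ^ (2 * k + 2) * ((2 * (k : ℝ) + 2) / (2 * (k : ℝ) + 2 + 1) ^ (s + 1))
      = w ^ (2 * k + 1) * (w * ((2 * (k : ℝ) + 2) / (2 * (k : ℝ) + 2 + 1) ^ (s + 1))) := by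
        rw [pow_succ]; ring
    _ ≤ w ^ (2 * k + 1) * ((2 * (k : ℝ) + 2) / (2 * (k : ℝ) + 2 + 1) ^ (s + 1)) := by
        apply mul_le_mul_of_nonneg_left (mul_le_of_le_one_left d2pos.le hw1)
          (pow_nonneg hw0.le _)
    _ < w ^ (2 * k + 1) * ((2 * (k : ℝ) + 1) / (2 * (k : ℝ) + 1 + 1) ^ (s + 1)) :=
        mul_lt_mul_of_pos_left key2 (pow_pos hw0 _)

/-- Difference of consecutive L-terms. -/
lemma D_eq (s : ℝ) (z : ℝ) (m : ℕ) :
    z ^ m / ((m : ℝ) + 1) ^ (s + 1) - z ^ m / ((m : ℝ) + 1) ^ s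
      = -(z ^ m * ((m : ℝ) / ((m : ℝ) + 1) ^ (s + 1))) := by
  have hm : (0 : ℝ) < (m : ℝ) + 1 := by positivity
  have hp : (0 : ℝ) < ((m : ℝ) + 1) ^ s := Real.rpow_pos_of_pos hm s
  rw [Real.rpow_add hm, Real.rpow_one]
  field_simp
  ring

/-- Positivity of the L-series itself (used in the borderline case). -/
lemma tsum_L_pos (r : ℝ) (hr : 1 ≤ r) (z : ℝ) (hz0 : -1 ≤ z) (hz1 : z < 0)
    (hsum : Summable (fun m : ℕ => z ^ m / ((m : ℝ) + 1) ^ r)) :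
    0 < ∑' m : ℕ, z ^ m / ((m : ℝ) + 1) ^ r := by
  apply tsum_pos_of_pairs _ hsum
  intro k
  have hw0 : 0 < -z := by linarith
  have hw1 : -z ≤ 1 := by linarith
  have e2 : z ^ (2 * k) = (-z) ^ (2 * k) := by
    rw [Even.neg_pow ⟨k, by ring⟩ z]
  have e1 : z ^ (2 * k + 1) = -(-z) ^ (2 * k + 1) := by
    rw [Odd.neg_pow ⟨k, by ring⟩ z, neg_neg]
  simp only [e1, e2]
  push_cast
  have hk : (0 : ℝ) ≤ (k : ℝ) := Nat.cast_nonneg k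
  have hb1 : (0 : ℝ) < (2 * (k : ℝ) + 1) ^ r :=
    Real.rpow_pos_of_pos (by linarith) _
  have hb2 : (0 : ℝ) < (2 * (k : ℝ) + 1 + 1) ^ r :=
    Real.rpow_pos_of_pos (by linarith) _
  have hp : (0 : ℝ) < (-z) ^ (2 * k) := pow_pos hw0 _
  have key : (-z) ^ (2 * k + 1) / (2 * (k : ℝ) + 1 + 1) ^ r
      < (-z) ^ (2 * k) / (2 * (k : ℝ) + 1) ^ r := by
    calc (-z) ^ (2 * k + 1) / (2 * (k : ℝ) + 1 + 1) ^ r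
        = (-z) ^ (2 * k) * ((-z) / (2 * (k : ℝ) + 1 + 1) ^ r) := by
          rw [pow_succ]; ring
      _ ≤ (-z) ^ (2 * k) * (1 / (2 * (k : ℝ) + 1 + 1) ^ r) := by
          gcongr
      _ < (-z) ^ (2 * k) * (1 / (2 * (k : ℝ) + 1) ^ r) := by
          apply mul_lt_mul_of_pos_left _ hp
          apply one_div_lt_one_div_of_lt hb1
          exact Real.rpow_lt_rpow (by linarith) (by linarith) (by linarith)
      _ = (-z) ^ (2 * k) / (2 * (k : ℝ) + 1) ^ r := by ring
  simp only [neg_div]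
  linarith [key]

/-- Positivity of a shifted pair of difference terms. -/
lemma pair_pos_D (s : ℝ) (hs : 1 ≤ s) (z : ℝ) (hz0 : -1 ≤ z) (hz1 : z < 0) (k : ℕ) :
    0 < -(z ^ (2 * k + 1) * (((2 * k + 1 : ℕ) : ℝ) / (((2 * k + 1 : ℕ) : ℝ) + 1) ^ (s + 1)))
      + -(z ^ (2 * k + 1 + 1)
          * (((2 * k + 1 + 1 : ℕ) : ℝ) / (((2 * k + 1 + 1 : ℕ) : ℝ) + 1) ^ (s + 1))) := by
  have hw0 : 0 < -z := by linarith
  have hw1 : -z ≤ 1 := by linarith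
  have hk : (0 : ℝ) ≤ (k : ℝ) := Nat.cast_nonneg k
  have e1 : z ^ (2 * k + 1) = -(-z) ^ (2 * k + 1) := by
    rw [Odd.neg_pow ⟨k, by ring⟩ z, neg_neg]
  have e2 : z ^ (2 * k + 1 + 1) = (-z) ^ (2 * k + 1 + 1) := by
    rw [Even.neg_pow ⟨k + 1, by ring⟩ z]
  simp only [e1, e2, neg_mul, neg_neg]
  push_cast
  have key := key_ineq s (2 * (k : ℝ) + 1 + 1) hs (by linarith)
  rw [show (2 * (k : ℝ) + 1 + 1) - 1 = 2 * (k : ℝ) + 1 by ring] at key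
  have hBpos : 0 < (2 * (k : ℝ) + 1 + 1) / (2 * (k : ℝ) + 1 + 1 + 1) ^ (s + 1) := by
    have : (0 : ℝ) < (2 * (k : ℝ) + 1 + 1 + 1) ^ (s + 1) :=
      Real.rpow_pos_of_pos (by linarith) _
    positivity
  have main : (-z) ^ (2 * k + 1 + 1)
        * ((2 * (k : ℝ) + 1 + 1) / (2 * (k : ℝ) + 1 + 1 + 1) ^ (s + 1))
      < (-z) ^ (2 * k + 1) * ((2 * (k : ℝ) + 1) / (2 * (k : ℝ) + 1 + 1) ^ (s + 1)) := by
    calc (-z) ^ (2 * k + 1 + 1)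
          * ((2 * (k : ℝ) + 1 + 1) / (2 * (k : ℝ) + 1 + 1 + 1) ^ (s + 1))
        = (-z) ^ (2 * k + 1)
          * ((-z) * ((2 * (k : ℝ) + 1 + 1) / (2 * (k : ℝ) + 1 + 1 + 1) ^ (s + 1))) := by
          rw [pow_succ]; ring
      _ ≤ (-z) ^ (2 * k + 1)
          * ((2 * (k : ℝ) + 1 + 1) / (2 * (k : ℝ) + 1 + 1 + 1) ^ (s + 1)) :=
          mul_le_mul_of_nonneg_left (mul_le_of_le_one_left hBpos.le hw1)
            (pow_nonneg hw0.le _)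
      _ < (-z) ^ (2 * k + 1) * ((2 * (k : ℝ) + 1) / (2 * (k : ℝ) + 1 + 1) ^ (s + 1)) :=
          mul_lt_mul_of_pos_left key (pow_pos hw0 _)
  linarith

/-- The main inequality in the summable case. -/
lemma tsum_lt_summable (s : ℝ) (hs : 1 ≤ s) (z : ℝ) (hz0 : -1 ≤ z) (hz1 : z < 0)
    (hf : Summable (fun m : ℕ => z ^ m / ((m : ℝ) + 1) ^ s))
    (hg : Summable (fun m : ℕ => z ^ m / ((m : ℝ) + 1) ^ (s + 1))) :
    (∑' m : ℕ, z ^ m / ((m : ℝ) + 1) ^ s) < ∑' m : ℕ, z ^ m / ((m : ℝ) + 1) ^ (s + 1) := by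
  rw [← sub_pos, ← Summable.tsum_sub hg hf]
  have hDsum : Summable
      (fun m : ℕ => z ^ m / ((m : ℝ) + 1) ^ (s + 1) - z ^ m / ((m : ℝ) + 1) ^ s) :=
    hg.sub hf
  rw [Summable.tsum_eq_zero_add hDsum]
  simp only [pow_zero, Nat.cast_zero, zero_add, Real.one_rpow, div_one, sub_self]
  apply tsum_pos_of_pairs _ ((summable_nat_add_iff 1).mpr hDsum)
  intro k
  simp only [D_eq]
  exact pair_pos_D s hs z hz0 hz1 k

/-- For integer `n ≥ 2` and `-1 ≤ z < 0`, `L_{(n/2)+1}(z) > L_{n/2}(z)`. -/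
theorem L_succ_gt_L_of_neg (n : ℕ) (hn : 2 ≤ n) (z : ℝ) (hz0 : -1 ≤ z) (hz1 : z < 0) :
    (∑' m : ℕ, z ^ m / ((m : ℝ) + 1) ^ ((n : ℝ)/2 + 1)) >
      ∑' m : ℕ, z ^ m / ((m : ℝ) + 1) ^ ((n : ℝ)/2) := by
  have hs1 : (1 : ℝ) ≤ (n : ℝ)/2 := by
    have h2 : (2 : ℝ) ≤ (n : ℝ) := by exact_mod_cast hn
    linarith
  have hzabs : |z| ≤ 1 := abs_le.mpr ⟨hz0, by linarith⟩
  by_cases hc : |z| < 1 ∨ 1 < (n : ℝ)/2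
  · exact tsum_lt_summable _ hs1 z hz0 hz1
      (summable_L _ (by linarith) z hzabs hc)
      (summable_L _ (by linarith) z hzabs (Or.inr (by linarith)))
  · push_neg at hc
    obtain ⟨hz, hs⟩ := hc
    have hzeq : z = -1 := by
      have h1 : |z| = 1 := le_antisymm hzabs hz
      rw [abs_of_neg hz1] at h1; linarith
    have hseq : (n : ℝ)/2 = 1 := le_antisymm hs hs1
    rw [hseq]
    have hns : ¬ Summable (fun m : ℕ => z ^ m / ((m : ℝ) + 1) ^ (1 : ℝ)) := by
      intro hsum
      have habs : Summable (fun m : ℕ => |z ^ m / ((m : ℝ) + 1) ^ (1 : ℝ)|) :=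
        summable_abs_iff.mpr hsum
      have heq : (fun m : ℕ => |z ^ m / ((m : ℝ) + 1) ^ (1 : ℝ)|)
          = fun m : ℕ => 1 / ((m : ℝ) + 1) := by
        funext m
        have hm : (0 : ℝ) < (m : ℝ) + 1 := by positivity
        rw [Real.rpow_one, abs_div, abs_pow, hzeq, abs_neg, abs_one, one_pow,
          abs_of_pos hm]
      rw [heq] at habs
      apply Real.not_summable_one_div_natCast
      exact (summable_nat_add_iff 1).mp (by simpa using habs)
    rw [tsum_eq_zero_of_not_summable hns]
    exact tsum_L_pos _ (by norm_num) z hz0 hz1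
      (summable_L _ (by norm_num) z hzabs (Or.inr (by norm_num)))
end

section
/- For real z with -0.8 ≤ z < 0, ∑_{m=1}^∞ z^{m-1}/m^{3/2} > ∑_{m=1}^∞ z^{m-1}/m^{1/2}, i.e. L_{3/2}(z) > L_{1/2}(z). -/
lemma rpow_three_halves (x : ℝ) (hx : 0 ≤ x) :
    x ^ ((3 : ℝ)/2) = x * Real.sqrt x := by
  rw [Real.sqrt_eq_rpow, show (3:ℝ)/2 = 1 + 1/2 by norm_num,
    Real.rpow_add' hx (by norm_num), Real.rpow_one]

lemma rpow_one_half (x : ℝ) :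
    x ^ ((1 : ℝ)/2) = Real.sqrt x := (Real.sqrt_eq_rpow x).symm

lemma summable_aux (z : ℝ) (hz : |z| < 1) (s : ℝ) (hs : 0 ≤ s) :
    Summable (fun m : ℕ => z ^ m / ((m : ℝ) + 1) ^ s) := by
  apply Summable.of_abs
  apply Summable.of_nonneg_of_le (fun m => abs_nonneg _) (fun m => ?_)
    (summable_geometric_of_lt_one (abs_nonneg z) hz)
  rw [abs_div, abs_pow]
  have h1 : (1:ℝ) ≤ ((m : ℝ) + 1) ^ s :=
    Real.one_le_rpow (by exact_mod_cast Nat.le_add_left 1 m) hs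
  rw [abs_of_nonneg (by positivity : (0:ℝ) ≤ ((m : ℝ) + 1) ^ s)]
  calc |z| ^ m / ((m : ℝ) + 1) ^ s ≤ |z| ^ m / 1 := by
        apply div_le_div_of_nonneg_left (by positivity) (by norm_num) h1
    _ = |z| ^ m := by ring

/-- Key inequality: for `n ≥ 1` and `-0.8 ≤ z < 0`, the paired coefficient is negative. -/
lemma key_neg (z : ℝ) (hz0 : -0.8 ≤ z) (hz1 : z < 0) (n : ℝ) (hn : 1 ≤ n) :
    1/(n+1) ^ ((3:ℝ)/2) - 1/(n+1) ^ ((1:ℝ)/2)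
      + z * (1/(n+2) ^ ((3:ℝ)/2) - 1/(n+2) ^ ((1:ℝ)/2)) < 0 := by
  have h1 : (0:ℝ) < n + 1 := by linarith
  have h2 : (0:ℝ) < n + 2 := by linarith
  set s := Real.sqrt (n+1) with hs_def
  set t := Real.sqrt (n+2) with ht_def
  have hs : 0 < s := Real.sqrt_pos.2 h1
  have ht : 0 < t := Real.sqrt_pos.2 h2
  have hs2 : s ^ 2 = n + 1 := Real.sq_sqrt h1.le
  have ht2 : t ^ 2 = n + 2 := Real.sq_sqrt h2.le
  rw [rpow_three_halves _ h1.le, rpow_three_halves _ h2.le, rpow_one_half, rpow_one_half,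
    ← hs_def, ← ht_def]
  have e1 : 1/((n+1)*s) - 1/s = -n/((n+1)*s) := by
    field_simp
    ring
  have e2 : 1/((n+2)*t) - 1/t = -(n+1)/((n+2)*t) := by
    field_simp
    ring
  rw [e1, e2]
  -- reduces to : -z * (n+1)/((n+2)*t) < n/((n+1)*s)
  have key2 : (4/5) * (n+1)^2 * s < n * (n+2) * t := by
    apply lt_of_pow_lt_pow_left₀ 2 (by positivity)
    have expand : ((4:ℝ)/5 * (n+1)^2 * s)^2 = (16/25) * (n+1)^4 * s^2 := by ring
    have expand2 : (n * (n+2) * t)^2 = n^2 * (n+2)^2 * t^2 := by ring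
    rw [expand, expand2, hs2, ht2]
    have h3 : n ≤ n^3 := by nlinarith [sq_nonneg (n-1), hn]
    have h0 : (1:ℝ) ≤ n^2 := by nlinarith [hn]
    nlinarith [h3, h0, hn, mul_pos (mul_pos (by linarith : (0:ℝ) < n) (by linarith : (0:ℝ) < n)) (by linarith : (0:ℝ) < n)]
  have hzle : -z ≤ 4/5 := by linarith
  have hzpos : 0 < -z := by linarith
  have step1 : z * (-(n+1)/((n+2)*t)) = (-z) * ((n+1)/((n+2)*t)) := by ring
  have step2 : (-z) * ((n+1)/((n+2)*t)) ≤ (4/5) * ((n+1)/((n+2)*t)) := by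
    apply mul_le_mul_of_nonneg_right hzle (by positivity)
  have step3 : (4/5) * ((n+1)/((n+2)*t)) < n/((n+1)*s) := by
    rw [mul_div_assoc', div_lt_div_iff₀ (by positivity) (by positivity)]
    calc 4/5 * (n+1) * ((n+1)*s) = (4/5) * (n+1)^2 * s := by ring
      _ < n * (n+2) * t := key2
      _ = n * ((n+2)*t) := by ring
  have : z * (-(n+1)/((n+2)*t)) < n/((n+1)*s) := by
    rw [step1]; exact lt_of_le_of_lt step2 step3
  have hneg : -n/((n+1)*s) = -(n/((n+1)*s)) := by ring
  rw [hneg]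
  linarith [this]

/-- For `-0.8 ≤ z < 0`, `L_{3/2}(z) > L_{1/2}(z)`. -/
theorem L_three_halves_gt_L_half (z : ℝ) (hz0 : -0.8 ≤ z) (hz1 : z < 0) :
    (∑' m : ℕ, z ^ m / ((m : ℝ) + 1) ^ ((3 : ℝ)/2)) >
      ∑' m : ℕ, z ^ m / ((m : ℝ) + 1) ^ ((1 : ℝ)/2) := by
  have hzabs : |z| < 1 := by
    rw [abs_lt]
    constructor <;> [linarith; linarith]
  have hS3 := summable_aux z hzabs ((3:ℝ)/2) (by norm_num)
  have hS1 := summable_aux z hzabs ((1:ℝ)/2) (by norm_num)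
  rw [gt_iff_lt, ← sub_pos, ← Summable.tsum_sub hS3 hS1]
  set f : ℕ → ℝ := fun m =>
    z ^ m / ((m : ℝ) + 1) ^ ((3:ℝ)/2) - z ^ m / ((m : ℝ) + 1) ^ ((1:ℝ)/2) with hf_def
  have hf : Summable f := hS3.sub hS1
  -- pair positivity: f (2k+1) + f (2k+2) > 0
  have pair_pos : ∀ k : ℕ, 0 < f (2*k+1) + f (2*k+2) := by
    intro k
    have hn : (1:ℝ) ≤ ((2*k+1 : ℕ) : ℝ) := by
      push_cast; linarith [Nat.cast_nonneg (α := ℝ) k]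
    have hkey := key_neg z hz0 hz1 ((2*k+1 : ℕ) : ℝ) hn
    have hzm : z ^ (2*k+1) < 0 := by
      have : z ^ (2*k+1) = z * (z^k)^2 := by ring
      rw [this]
      have hk2 : (0:ℝ) < (z^k)^2 := pow_two_pos_of_ne_zero (pow_ne_zero k hz1.ne)
      exact mul_neg_of_neg_of_pos hz1 hk2
    have cast1 : ((2*k+2 : ℕ) : ℝ) + 1 = ((2*k+1 : ℕ) : ℝ) + 2 := by push_cast; ring
    have hexp : f (2*k+1) + f (2*k+2)
        = z ^ (2*k+1) * (1/(((2*k+1 : ℕ) : ℝ)+1) ^ ((3:ℝ)/2)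
            - 1/(((2*k+1 : ℕ) : ℝ)+1) ^ ((1:ℝ)/2)
          + z * (1/(((2*k+1 : ℕ) : ℝ)+2) ^ ((3:ℝ)/2)
            - 1/(((2*k+1 : ℕ) : ℝ)+2) ^ ((1:ℝ)/2))) := by
      simp only [hf_def]
      rw [cast1, pow_succ z (2*k+1)]
      ring
    rw [hexp]
    exact mul_pos_of_neg_of_neg hzm hkey
  -- f 0 = 0
  have hf0 : f 0 = 0 := by
    simp [hf_def, Real.one_rpow]
  -- shift and split into pairs
  have hF : Summable (fun m => f (m + 1)) := (summable_nat_add_iff 1).2 hf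
  have heven : Summable (fun k => f (2*k + 1)) := by
    have := hF.comp_injective (i := fun k : ℕ => 2*k)
      (fun a b h => by simp only at h; omega)
    simpa [Function.comp_def] using this
  have hodd : Summable (fun k => f (2*k + 2)) := by
    have := hF.comp_injective (i := fun k : ℕ => 2*k+1)
      (fun a b h => by simp only at h; omega)
    simpa [Function.comp_def] using this
  rw [Summable.tsum_eq_zero_add hf, hf0, zero_add]
  have hsplit : (∑' k, f (2*k + 1)) + ∑' k, f (2*k + 2) = ∑' m, f (m + 1) := by
    have := tsum_even_add_odd (f := fun m => f (m+1)) heven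
      (by simpa [show ∀ k, 2*k+1+1 = 2*k+2 from fun k => by ring] using hodd)
    simpa [show ∀ k, 2*k+1+1 = 2*k+2 from fun k => by ring] using this
  rw [← hsplit, ← Summable.tsum_add heven hodd]
  exact Summable.tsum_pos (heven.add hodd) (fun k => (pair_pos k).le) 0 (pair_pos 0)
end

section
/- For k < 0, the function C ↦ C · L_{n/2}(kC) is strictly monotonically increasing on [0, ∞) and tends to ∞ as C → ∞, where for negative argument L_{n/2}(z) = (2^{1-n/2}/Γ(n/2)) ∫_0^∞ e^{-r²/2} r^{n-1}/(1 - z e^{-r²/2}) dr. -/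
open MeasureTheory Set Filter

/-- Integral representation of `L_{n/2}(z)` (valid for `z ≤ 0`, in particular). -/
noncomputable def Lint (n : ℕ) (z : ℝ) : ℝ :=
  (2 ^ (1 - (n : ℝ)/2) / Real.Gamma ((n : ℝ)/2)) *
    ∫ r in Set.Ioi (0:ℝ),
      Real.exp (-r ^ 2 / 2) * r ^ (n - 1) / (1 - z * Real.exp (-r ^ 2 / 2))

private lemma denom_ge (k C r : ℝ) (hk : k < 0) (hC : 0 ≤ C) :
    1 ≤ 1 - k * C * Real.exp (-r ^ 2 / 2) := by
  nlinarith [Real.exp_pos (-r ^ 2 / 2), mul_nonneg (neg_nonneg.mpr hk.le) hC]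

private lemma phi_cont (n : ℕ) (k C : ℝ) (hk : k < 0) (hC : 0 ≤ C) :
    Continuous fun r : ℝ =>
      Real.exp (-r ^ 2 / 2) * r ^ (n - 1) / (1 - k * C * Real.exp (-r ^ 2 / 2)) := by
  apply Continuous.div (by fun_prop) (by fun_prop)
  intro r
  have := denom_ge k C r hk hC
  linarith

private lemma integrable_phi (n : ℕ) (hn : 1 ≤ n) (k C : ℝ) (hk : k < 0) (hC : 0 ≤ C) :
    IntegrableOn (fun r : ℝ =>
      Real.exp (-r ^ 2 / 2) * r ^ (n - 1) / (1 - k * C * Real.exp (-r ^ 2 / 2)))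
      (Set.Ioi 0) := by
  have hbase : IntegrableOn (fun r : ℝ => r ^ (n - 1) * Real.exp (-(1/2) * r ^ 2))
      (Set.Ioi 0) := by
    have h := integrableOn_rpow_mul_exp_neg_mul_sq (b := 1/2) (by norm_num)
      (s := ((n - 1 : ℕ) : ℝ)) ((by norm_num : (-1:ℝ) < 0).trans_le (Nat.cast_nonneg _))
    refine h.congr_fun (fun x _ => ?_) measurableSet_Ioi
    simp only [Real.rpow_natCast]
  refine hbase.mono' ((phi_cont n k C hk hC).aestronglyMeasurable.restrict) ?_
  rw [ae_restrict_iff' measurableSet_Ioi]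
  refine ae_of_all _ (fun r hr => ?_)
  have hr0 : (0:ℝ) < r := hr
  have he : (0:ℝ) < Real.exp (-r ^ 2 / 2) := Real.exp_pos _
  have hp : (0:ℝ) < r ^ (n - 1) := pow_pos hr0 _
  have hd : 1 ≤ 1 - k * C * Real.exp (-r ^ 2 / 2) := denom_ge k C r hk hC
  have h1 : Real.exp (-r ^ 2 / 2) * r ^ (n - 1) / (1 - k * C * Real.exp (-r ^ 2 / 2))
      ≤ Real.exp (-r ^ 2 / 2) * r ^ (n - 1) := by
    rw [div_le_iff₀ (by linarith)]
    nlinarith [mul_pos he hp]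
  have h2 : (0:ℝ) ≤ Real.exp (-r ^ 2 / 2) * r ^ (n - 1) / (1 - k * C * Real.exp (-r ^ 2 / 2)) :=
    div_nonneg (by positivity) (by linarith)
  rw [Real.norm_eq_abs, abs_of_nonneg h2]
  calc Real.exp (-r ^ 2 / 2) * r ^ (n - 1) / (1 - k * C * Real.exp (-r ^ 2 / 2))
      ≤ Real.exp (-r ^ 2 / 2) * r ^ (n - 1) := h1
    _ = r ^ (n - 1) * Real.exp (-(1/2) * r ^ 2) := by ring_nf

private lemma integrable_H (n : ℕ) (hn : 1 ≤ n) (k C : ℝ) (hk : k < 0) (hC : 0 ≤ C) :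
    IntegrableOn (fun r : ℝ =>
      C * (Real.exp (-r ^ 2 / 2) * r ^ (n - 1) / (1 - k * C * Real.exp (-r ^ 2 / 2))))
      (Set.Ioi 0) :=
  (integrable_phi n hn k C hk hC).const_mul C

private lemma pointwise_lt (n : ℕ) (k : ℝ) (hk : k < 0) {C1 C2 r : ℝ}
    (h1 : 0 ≤ C1) (h12 : C1 < C2) (hr : 0 < r) :
    C1 * (Real.exp (-r ^ 2 / 2) * r ^ (n - 1) / (1 - k * C1 * Real.exp (-r ^ 2 / 2))) <
    C2 * (Real.exp (-r ^ 2 / 2) * r ^ (n - 1) / (1 - k * C2 * Real.exp (-r ^ 2 / 2))) := by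
  have he : (0:ℝ) < Real.exp (-r ^ 2 / 2) := Real.exp_pos _
  have hp : (0:ℝ) < r ^ (n - 1) := pow_pos hr _
  have hd1 : 1 ≤ 1 - k * C1 * Real.exp (-r ^ 2 / 2) := denom_ge k C1 r hk h1
  have hd2 : 1 ≤ 1 - k * C2 * Real.exp (-r ^ 2 / 2) := denom_ge k C2 r hk (by linarith)
  rw [mul_div_assoc', mul_div_assoc', div_lt_div_iff₀ (by linarith) (by linarith)]
  nlinarith [mul_pos (mul_pos he hp) (sub_pos.mpr h12), mul_pos he hp]

private lemma key_lt (n : ℕ) (hn : 1 ≤ n) (k : ℝ) (hk : k < 0) {C1 C2 : ℝ}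
    (h1 : 0 ≤ C1) (h12 : C1 < C2) :
    (∫ r in Set.Ioi (0:ℝ),
        C1 * (Real.exp (-r ^ 2 / 2) * r ^ (n - 1) / (1 - k * C1 * Real.exp (-r ^ 2 / 2)))) <
    ∫ r in Set.Ioi (0:ℝ),
        C2 * (Real.exp (-r ^ 2 / 2) * r ^ (n - 1) / (1 - k * C2 * Real.exp (-r ^ 2 / 2))) := by
  have h2 : (0:ℝ) ≤ C2 := by linarith
  have hi1 := integrable_H n hn k C1 hk h1
  have hi2 := integrable_H n hn k C2 hk h2
  have hsub : IntegrableOn (fun r : ℝ =>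
      C2 * (Real.exp (-r ^ 2 / 2) * r ^ (n - 1) / (1 - k * C2 * Real.exp (-r ^ 2 / 2)))
        - C1 * (Real.exp (-r ^ 2 / 2) * r ^ (n - 1) / (1 - k * C1 * Real.exp (-r ^ 2 / 2))))
      (Set.Ioi 0) := hi2.sub hi1
  have hpos : 0 < ∫ r in Set.Ioi (0:ℝ),
      (C2 * (Real.exp (-r ^ 2 / 2) * r ^ (n - 1) / (1 - k * C2 * Real.exp (-r ^ 2 / 2)))
        - C1 * (Real.exp (-r ^ 2 / 2) * r ^ (n - 1) / (1 - k * C1 * Real.exp (-r ^ 2 / 2)))) := by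
    rw [setIntegral_pos_iff_support_of_nonneg_ae ?_ hsub]
    · refine lt_of_lt_of_le ?_ (measure_mono (s := Set.Ioi (1:ℝ)) (fun x hx => ?_))
      · simp [Real.volume_Ioi]
      · have hx1 : (1:ℝ) < x := hx
        have hx0 : (0:ℝ) < x := lt_trans one_pos hx1
        exact ⟨ne_of_gt (sub_pos.mpr (pointwise_lt n k hk h1 h12 hx0)), hx0⟩
    · filter_upwards [ae_restrict_mem measurableSet_Ioi] with r hr using
        sub_nonneg.mpr (pointwise_lt n k hk h1 h12 hr).le
  have := integral_sub hi2 hi1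
  rw [this] at hpos
  linarith

private lemma lower_bound (n : ℕ) (hn : 1 ≤ n) (k : ℝ) (hk : k < 0) {R C : ℝ} (hR : 1 ≤ R)
    (hC : 1 ≤ (-k) * C * Real.exp (-R ^ 2 / 2)) :
    R ^ n / ((n : ℝ) * (2 * -k)) ≤
      ∫ r in Set.Ioi (0:ℝ),
        C * (Real.exp (-r ^ 2 / 2) * r ^ (n - 1) / (1 - k * C * Real.exp (-r ^ 2 / 2))) := by
  have ha : (0:ℝ) < -k := by linarith
  have hgR : (0:ℝ) < Real.exp (-R ^ 2 / 2) := Real.exp_pos _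
  have hC0 : (0:ℝ) < C := by nlinarith [mul_pos ha hgR]
  have hnR : (0:ℝ) < (n : ℝ) := by exact_mod_cast hn
  have hint := integrable_H n hn k C hk hC0.le
  -- step 1 : integral over Ioc 0 R is a lower bound
  have hnonneg : ∀ r ∈ Set.Ioi (0:ℝ), 0 ≤
      C * (Real.exp (-r ^ 2 / 2) * r ^ (n - 1) / (1 - k * C * Real.exp (-r ^ 2 / 2))) := by
    intro r hr
    have hr0 : (0:ℝ) < r := hr
    have hd := denom_ge k C r hk hC0.le
    have : (0:ℝ) ≤ r ^ (n-1) := (pow_pos hr0 _).le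
    positivity
  have hsub : Set.Ioc (0:ℝ) R ⊆ Set.Ioi 0 := Set.Ioc_subset_Ioi_self
  have step1 : (∫ r in Set.Ioc (0:ℝ) R,
      C * (Real.exp (-r ^ 2 / 2) * r ^ (n - 1) / (1 - k * C * Real.exp (-r ^ 2 / 2)))) ≤
      ∫ r in Set.Ioi (0:ℝ),
      C * (Real.exp (-r ^ 2 / 2) * r ^ (n - 1) / (1 - k * C * Real.exp (-r ^ 2 / 2))) := by
    refine setIntegral_mono_set hint ?_ (HasSubset.Subset.eventuallyLE hsub)
    filter_upwards [ae_restrict_mem measurableSet_Ioi] with r hr using hnonneg r hr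
  -- step 2 : pointwise lower bound on Ioc 0 R
  have step2 : (∫ r in Set.Ioc (0:ℝ) R, r ^ (n - 1) / (2 * -k)) ≤
      ∫ r in Set.Ioc (0:ℝ) R,
      C * (Real.exp (-r ^ 2 / 2) * r ^ (n - 1) / (1 - k * C * Real.exp (-r ^ 2 / 2))) := by
    refine setIntegral_mono_on ?_ (hint.mono_set hsub) measurableSet_Ioc ?_
    · exact (Continuous.integrableOn_Ioc (by fun_prop))
    · intro r hr
      have hr0 : (0:ℝ) < r := hr.1
      have he : (0:ℝ) < Real.exp (-r ^ 2 / 2) := Real.exp_pos _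
      have hp : (0:ℝ) < r ^ (n - 1) := pow_pos hr0 _
      have hge : Real.exp (-R ^ 2 / 2) ≤ Real.exp (-r ^ 2 / 2) := by
        apply Real.exp_le_exp.mpr
        have : r ^ 2 ≤ R ^ 2 := by nlinarith [hr.2]
        linarith
      have hkey : 1 ≤ (-k) * C * Real.exp (-r ^ 2 / 2) := by
        refine le_trans hC ?_
        exact mul_le_mul_of_nonneg_left hge (by positivity)
      have hd : 1 ≤ 1 - k * C * Real.exp (-r ^ 2 / 2) := denom_ge k C r hk hC0.le
      rw [mul_div_assoc', div_le_div_iff₀ (by linarith) (by linarith)]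
      nlinarith [mul_le_mul_of_nonneg_left hkey hp.le, mul_pos he hp]
  -- step 3 : compute the explicit integral
  have step3 : (∫ r in Set.Ioc (0:ℝ) R, r ^ (n - 1) / (2 * -k)) =
      R ^ n / ((n : ℝ) * (2 * -k)) := by
    rw [← intervalIntegral.integral_of_le (by linarith : (0:ℝ) ≤ R)]
    rw [intervalIntegral.integral_div, integral_pow]
    have hnn : (n - 1) + 1 = n := Nat.sub_add_cancel hn
    have hcast : ((n - 1 : ℕ) : ℝ) + 1 = (n : ℝ) := by exact_mod_cast hnn
    rw [hnn, hcast, zero_pow (by omega : n ≠ 0), sub_zero, div_div]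
  linarith

/-- For `k < 0`, `C ↦ C·L_{n/2}(kC)` is strictly increasing on `[0,∞)`
and tends to `∞` as `C → ∞`. -/
theorem CL_strictMono_and_tendsto_atTop (n : ℕ) (hn : 1 ≤ n) (k : ℝ) (hk : k < 0) :
    StrictMonoOn (fun C : ℝ => C * Lint n (k * C)) (Set.Ici 0) ∧
      Filter.Tendsto (fun C : ℝ => C * Lint n (k * C)) Filter.atTop Filter.atTop := by
  have hn0 : (0:ℝ) < (n : ℝ) := by exact_mod_cast hn
  have hΓ : 0 < Real.Gamma ((n : ℝ)/2) := Real.Gamma_pos_of_pos (by positivity)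
  set c : ℝ := 2 ^ (1 - (n : ℝ)/2) / Real.Gamma ((n : ℝ)/2) with hc_def
  have hc : 0 < c := by
    apply div_pos _ hΓ
    exact Real.rpow_pos_of_pos two_pos _
  have hf : ∀ C : ℝ, C * Lint n (k * C) = c * ∫ r in Set.Ioi (0:ℝ),
      C * (Real.exp (-r ^ 2 / 2) * r ^ (n - 1) / (1 - k * C * Real.exp (-r ^ 2 / 2))) := by
    intro C
    rw [Lint, integral_const_mul]
    simp only [mul_assoc]
    ring
  constructor
  · intro C1 h1 C2 h2 h12
    simp only [hf]
    exact mul_lt_mul_of_pos_left (key_lt n hn k hk h1 h12) hc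
  · rw [tendsto_atTop]
    intro b
    -- choose R
    set R : ℝ := max 1 (b * ((n : ℝ) * (2 * -k)) / c) with hR_def
    have hR1 : (1:ℝ) ≤ R := le_max_left _ _
    have hR0 : (0:ℝ) < R := by linarith
    have hbound : b ≤ c * (R ^ n / ((n : ℝ) * (2 * -k))) := by
      have hD : (0:ℝ) < (n : ℝ) * (2 * -k) := by nlinarith
      have h1 : b * ((n : ℝ) * (2 * -k)) / c ≤ R := le_max_right _ _
      have h2 : R ≤ R ^ n := le_self_pow₀ hR1 (by omega)
      rw [mul_div_assoc', le_div_iff₀ hD]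
      calc b * ((n : ℝ) * (2 * -k)) ≤ c * R := by
            rw [div_le_iff₀ hc] at h1; linarith
        _ ≤ c * R ^ n := by nlinarith
    set C0 : ℝ := 1 / ((-k) * Real.exp (-R ^ 2 / 2)) with hC0_def
    rw [eventually_atTop]
    refine ⟨C0, fun C hC => ?_⟩
    have hgR : (0:ℝ) < Real.exp (-R ^ 2 / 2) := Real.exp_pos _
    have hak : (0:ℝ) < (-k) * Real.exp (-R ^ 2 / 2) := mul_pos (by linarith) hgR
    have hCkey : 1 ≤ (-k) * C * Real.exp (-R ^ 2 / 2) := by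
      rw [hC0_def] at hC
      rw [div_le_iff₀ hak] at hC
      nlinarith
    have := lower_bound n hn k hk hR1 hCkey
    rw [hf C]
    calc b ≤ c * (R ^ n / ((n : ℝ) * (2 * -k))) := hbound
      _ ≤ c * _ := mul_le_mul_of_nonneg_left this hc.le
end

section
/- For k < 0 (fermion case) and any ρ̃ > 0, V_Ω > 0, the equation (2π)^{n/2} V_Ω C L_{n/2}(kC) = ρ̃ has exactly one solution C > 0. -/
open MeasureTheory Real Set Filter

namespace FermionAux

noncomputable def g (n : ℕ) (r : ℝ) : ℝ := Real.exp (-r ^ 2 / 2) * r ^ (n - 1)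

noncomputable def E (k C r : ℝ) : ℝ := 1 / C - k * Real.exp (-r ^ 2 / 2)

noncomputable def F (n : ℕ) (k C : ℝ) : ℝ := ∫ r in Ioi (0:ℝ), g n r / E k C r

lemma g_nonneg (n : ℕ) {r : ℝ} (hr : 0 ≤ r) : 0 ≤ g n r :=
  mul_nonneg (Real.exp_pos _).le (pow_nonneg hr _)

lemma g_pos (n : ℕ) {r : ℝ} (hr : 0 < r) : 0 < g n r :=
  mul_pos (Real.exp_pos _) (pow_pos hr _)

lemma E_ge {k C : ℝ} (hk : k < 0) (hC : 0 < C) (r : ℝ) : 1 / C ≤ E k C r := by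
  have h : 0 ≤ (-k) * Real.exp (-r ^ 2 / 2) :=
    mul_nonneg (by linarith) (Real.exp_pos _).le
  unfold E; nlinarith

lemma E_pos {k C : ℝ} (hk : k < 0) (hC : 0 < C) (r : ℝ) : 0 < E k C r :=
  lt_of_lt_of_le (by positivity) (E_ge hk hC r)

lemma g_integrable (n : ℕ) : IntegrableOn (g n) (Ioi 0) := by
  have h := integrableOn_rpow_mul_exp_neg_mul_sq (b := 1/2) (by norm_num)
    (s := ((n - 1 : ℕ) : ℝ)) (lt_of_lt_of_le (by norm_num) (Nat.cast_nonneg _))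
  refine h.congr_fun (fun x hx => ?_) measurableSet_Ioi
  dsimp only
  rw [Real.rpow_natCast, mul_comm, show (-(1/2) * x ^ 2 : ℝ) = -x ^ 2 / 2 by ring]
  rfl

lemma integrand_continuous {n : ℕ} {k C : ℝ} (hk : k < 0) (hC : 0 < C) :
    Continuous (fun r => g n r / E k C r) := by
  apply Continuous.div
  · exact (Real.continuous_exp.comp (by continuity)).mul (continuous_pow _)
  · exact continuous_const.sub (continuous_const.mul
      (Real.continuous_exp.comp (by continuity)))
  · exact fun r => (E_pos hk hC r).ne'

lemma integrand_le {n : ℕ} {k C : ℝ} (hk : k < 0) (hC : 0 < C) {r : ℝ} (hr : 0 < r) :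
    g n r / E k C r ≤ C * g n r := by
  have hg := g_nonneg n hr.le
  calc g n r / E k C r ≤ g n r / (1 / C) :=
        div_le_div_of_nonneg_left hg (by positivity) (E_ge hk hC r)
    _ = C * g n r := by rw [one_div, div_eq_mul_inv, inv_inv, mul_comm]

lemma F_integrable {n : ℕ} {k C : ℝ} (hk : k < 0) (hC : 0 < C) :
    IntegrableOn (fun r => g n r / E k C r) (Ioi 0) := by
  apply Integrable.mono' (((g_integrable n).const_mul C))
    ((integrand_continuous hk hC).aestronglyMeasurable)
  filter_upwards [ae_restrict_mem measurableSet_Ioi] with r hr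
  have hg := g_nonneg n (le_of_lt hr)
  have hE := E_pos hk hC r
  rw [Real.norm_eq_abs, abs_of_nonneg (div_nonneg hg hE.le)]
  exact integrand_le hk hC hr

lemma F_strictMono {n : ℕ} {k : ℝ} (hk : k < 0) : StrictMonoOn (F n k) (Ioi 0) := by
  intro C1 h1 C2 h2 h12
  rw [mem_Ioi] at h1 h2
  have hI1 := F_integrable (n := n) hk h1
  have hI2 := F_integrable (n := n) hk h2
  have hlt : ∀ r ∈ Ioi (0:ℝ), g n r / E k C1 r < g n r / E k C2 r := by
    intro r hr
    rw [mem_Ioi] at hr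
    have hE2 := E_pos hk h2 r
    have hElt : E k C2 r < E k C1 r := by
      unfold E
      have : 1 / C2 < 1 / C1 := one_div_lt_one_div_of_lt h1 h12
      linarith
    exact div_lt_div_of_pos_left (g_pos n hr) hE2 hElt
  have hsub : 0 < ∫ r in Ioi (0:ℝ), (g n r / E k C2 r - g n r / E k C1 r) := by
    rw [integral_pos_iff_support_of_nonneg_ae]
    · have hsupp : Ioi (0:ℝ) ⊆
          Function.support fun r => g n r / E k C2 r - g n r / E k C1 r :=
        fun r hr => Function.mem_support.mpr (sub_ne_zero.mpr (hlt r hr).ne')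
      calc (0:ENNReal) < volume.restrict (Ioi 0) (Ioi 0) := by
            rw [Measure.restrict_apply_self, Real.volume_Ioi]; exact ENNReal.zero_lt_top
        _ ≤ _ := measure_mono hsupp
    · rw [EventuallyLE, ae_restrict_iff' measurableSet_Ioi]
      exact ae_of_all _ fun r hr => sub_nonneg.mpr (hlt r hr).le
    · exact hI2.sub hI1
  have heq : ∫ r in Ioi (0:ℝ), (g n r / E k C2 r - g n r / E k C1 r)
      = F n k C2 - F n k C1 := integral_sub hI2 hI1
  unfold F
  unfold F at heq
  linarith [heq ▸ hsub]

lemma F_continuousAt {n : ℕ} {k C : ℝ} (hk : k < 0) (hC : 0 < C) :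
    ContinuousAt (F n k) C := by
  unfold F
  apply continuousAt_of_dominated (bound := fun r => (2 * C) * g n r)
  · filter_upwards [Ioi_mem_nhds hC] with c hc
    exact (integrand_continuous (n := n) hk hc).aestronglyMeasurable
  · filter_upwards [Ioo_mem_nhds (by linarith : C / 2 < C) (by linarith : C < 2 * C)]
      with c hc
    filter_upwards [ae_restrict_mem measurableSet_Ioi] with r hr
    have hc0 : 0 < c := lt_trans (by linarith) hc.1
    have hg := g_nonneg n (le_of_lt hr)
    have hE := E_pos hk hc0 r
    rw [Real.norm_eq_abs, abs_of_nonneg (div_nonneg hg hE.le)]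
    calc g n r / E k c r ≤ c * g n r := integrand_le hk hc0 hr
      _ ≤ (2 * C) * g n r := mul_le_mul_of_nonneg_right hc.2.le hg
  · exact (g_integrable n).const_mul _
  · filter_upwards [ae_restrict_mem measurableSet_Ioi] with r hr
    apply ContinuousAt.div continuousAt_const
    · exact ((continuousAt_const.div continuousAt_id hC.ne').sub continuousAt_const)
    · exact (E_pos hk hC r).ne'

lemma F_large {n : ℕ} (hn : 1 ≤ n) {k : ℝ} (hk : k < 0) (M : ℝ) :
    ∃ C : ℝ, 0 < C ∧ M < F n k C := by
  have hk' : 0 < -k := by linarith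
  set R : ℝ := max 1 (2 * (-k) * n * (M + 1)) with hRdef
  have hR1 : (1:ℝ) ≤ R := le_max_left _ _
  have hR0 : (0:ℝ) < R := by linarith
  have hn0 : (0:ℝ) < n := by exact_mod_cast hn
  refine ⟨Real.exp (R ^ 2 / 2) / (-k), by positivity, ?_⟩
  set C : ℝ := Real.exp (R ^ 2 / 2) / (-k) with hCdef
  have hC : 0 < C := by positivity
  have hinv : 1 / C = (-k) * Real.exp (-R ^ 2 / 2) := by
    rw [hCdef, one_div_div, show (-R ^ 2 / 2 : ℝ) = -(R ^ 2 / 2) by ring, Real.exp_neg]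
    field_simp
  have key : ∀ r ∈ Ioc (0:ℝ) R, r ^ (n - 1) / (2 * (-k)) ≤ g n r / E k C r := by
    intro r hr
    obtain ⟨hr0, hrR⟩ := hr
    have he : Real.exp (-R ^ 2 / 2) ≤ Real.exp (-r ^ 2 / 2) := by
      apply Real.exp_le_exp.mpr; nlinarith
    have hE : 0 < E k C r := E_pos hk hC r
    have hEle : E k C r ≤ 2 * (-k) * Real.exp (-r ^ 2 / 2) := by
      unfold E; rw [hinv]; nlinarith
    have h1 : g n r / (2 * (-k) * Real.exp (-r ^ 2 / 2)) ≤ g n r / E k C r :=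
      div_le_div_of_nonneg_left (g_nonneg n hr0.le) hE hEle
    refine le_trans (le_of_eq ?_) h1
    unfold g
    rw [show (2 * (-k) * Real.exp (-r ^ 2 / 2) : ℝ)
          = Real.exp (-r ^ 2 / 2) * (2 * (-k)) by ring]
    exact (mul_div_mul_left _ _ (Real.exp_ne_zero _)).symm
  have hcast : ((n - 1 : ℕ) : ℝ) + 1 = (n : ℝ) := by
    exact_mod_cast congrArg (Nat.cast (R := ℝ)) (Nat.sub_add_cancel hn)
  have h1 : ∫ r in Ioc (0:ℝ) R, r ^ (n - 1) = R ^ n / n := by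
    rw [← intervalIntegral.integral_of_le hR0.le, integral_pow, hcast,
      Nat.sub_add_cancel hn, zero_pow (by omega), sub_zero]
  have h2 : ∫ r in Ioc (0:ℝ) R, r ^ (n - 1) / (2 * (-k)) = R ^ n / n / (2 * (-k)) := by
    rw [integral_div, h1]
  have hIoc : IntegrableOn (fun r => g n r / E k C r) (Ioc 0 R) :=
    (F_integrable hk hC).mono_set Ioc_subset_Ioi_self
  have h3 : ∫ r in Ioc (0:ℝ) R, r ^ (n - 1) / (2 * (-k))
      ≤ ∫ r in Ioc (0:ℝ) R, g n r / E k C r := by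
    apply setIntegral_mono_on _ hIoc measurableSet_Ioc key
    exact ((continuous_pow _).div_const _).integrableOn_Ioc
  have h4 : ∫ r in Ioc (0:ℝ) R, g n r / E k C r ≤ F n k C := by
    apply setIntegral_mono_set (F_integrable hk hC) _
      (HasSubset.Subset.eventuallyLE Ioc_subset_Ioi_self)
    rw [EventuallyLE, ae_restrict_iff' measurableSet_Ioi]
    exact ae_of_all _ fun r hr =>
      div_nonneg (g_nonneg n (le_of_lt hr)) (E_pos hk hC r).le
  have hRn : R ≤ R ^ n := le_self_pow₀ hR1 (by omega)
  have h5 : M + 1 ≤ R ^ n / n / (2 * (-k)) := by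
    rw [div_div, le_div_iff₀ (by positivity)]
    nlinarith [le_max_right 1 (2 * (-k) * n * (M + 1))]
  linarith [h2 ▸ h3, h4]

lemma F_small {n : ℕ} {k : ℝ} (hk : k < 0) {ε : ℝ} (hε : 0 < ε) :
    ∃ C : ℝ, 0 < C ∧ F n k C < ε := by
  set I : ℝ := ∫ r in Ioi (0:ℝ), g n r with hIdef
  have hI : 0 ≤ I :=
    setIntegral_nonneg measurableSet_Ioi fun r hr => g_nonneg n (le_of_lt hr)
  refine ⟨ε / (2 * (I + 1)), by positivity, ?_⟩
  set C : ℝ := ε / (2 * (I + 1)) with hCdef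
  have hC : 0 < C := by positivity
  have h1 : F n k C ≤ ∫ r in Ioi (0:ℝ), C * g n r := by
    apply setIntegral_mono_on (F_integrable hk hC) ((g_integrable n).const_mul C)
      measurableSet_Ioi
    exact fun r hr => integrand_le hk hC hr
  have h2 : ∫ r in Ioi (0:ℝ), C * g n r = C * I := by
    rw [hIdef, ← integral_const_mul]
  have h3 : C * I ≤ C * (I + 1) := by nlinarith
  have h4 : C * (I + 1) = ε / 2 := by
    rw [hCdef]; field_simp
  linarith

end FermionAux

/-- fermion case: the density equation has exactly one positive solution. -/
theorem fermion_unique_C (n : ℕ) (hn : 1 ≤ n) (k : ℝ) (hk : k < 0)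
    (ρ V : ℝ) (hρ : 0 < ρ) (hV : 0 < V) :
    ∃! C : ℝ, 0 < C ∧ (2 * Real.pi) ^ ((n : ℝ)/2) * V * C * Lint n (k * C) = ρ := by
  open FermionAux in
  have hn0 : (0:ℝ) < n := by exact_mod_cast hn
  have hΓ : 0 < Real.Gamma ((n:ℝ)/2) := Real.Gamma_pos_of_pos (by positivity)
  set c : ℝ := 2 ^ (1 - (n : ℝ)/2) / Real.Gamma ((n : ℝ)/2) with hc
  have hcpos : 0 < c := by rw [hc]; positivity
  set A : ℝ := (2 * Real.pi) ^ ((n : ℝ)/2) * V * c with hA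
  have hApos : 0 < A := by
    rw [hA]
    have := Real.pi_pos
    positivity
  have key : ∀ C : ℝ, 0 < C →
      ((2 * Real.pi) ^ ((n : ℝ)/2) * V * C * Lint n (k * C) = ρ
        ↔ FermionAux.F n k C = ρ / A) := by
    intro C hC
    have hpt : ∀ r : ℝ,
        C * (Real.exp (-r ^ 2 / 2) * r ^ (n - 1) / (1 - k * C * Real.exp (-r ^ 2 / 2)))
          = FermionAux.g n r / FermionAux.E k C r := by
      intro r
      have he := Real.exp_pos (-r ^ 2 / 2)
      have hD : 0 < 1 - k * C * Real.exp (-r ^ 2 / 2) := by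
        nlinarith [mul_pos (mul_pos (neg_pos.mpr hk) hC) he]
      have hE' : 0 < 1 / C - k * Real.exp (-r ^ 2 / 2) := FermionAux.E_pos hk hC r
      unfold FermionAux.g FermionAux.E
      rw [show (1 / C - k * Real.exp (-r ^ 2 / 2))
            = (1 - k * C * Real.exp (-r ^ 2 / 2)) / C from by
          field_simp, div_div_eq_mul_div,
        mul_comm (Real.exp (-r ^ 2 / 2) * r ^ (n - 1)) C, mul_div_assoc]
      ring
    have hrw : C * Lint n (k * C) = c * FermionAux.F n k C := by
      unfold Lint FermionAux.F
      rw [← hc]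
      rw [show C * (c * ∫ r in Ioi (0:ℝ),
            Real.exp (-r ^ 2 / 2) * r ^ (n - 1) / (1 - k * C * Real.exp (-r ^ 2 / 2)))
          = c * (C * ∫ r in Ioi (0:ℝ),
            Real.exp (-r ^ 2 / 2) * r ^ (n - 1) / (1 - k * C * Real.exp (-r ^ 2 / 2)))
          by ring]
      rw [← integral_const_mul]
      congr 1
      exact integral_congr_ae (ae_of_all _ fun r => hpt r)
    constructor
    · intro h
      have : A * FermionAux.F n k C = ρ := by
        rw [hA]
        calc (2 * Real.pi) ^ ((n : ℝ)/2) * V * c * FermionAux.F n k C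
            = (2 * Real.pi) ^ ((n : ℝ)/2) * V * (C * Lint n (k * C)) := by rw [hrw]; ring
          _ = ρ := by rw [← h]; ring
      rw [eq_div_iff hApos.ne', mul_comm]
      exact this
    · intro h
      have h' : A * FermionAux.F n k C = ρ := by
        rw [h]; field_simp
      calc (2 * Real.pi) ^ ((n : ℝ)/2) * V * C * Lint n (k * C)
          = (2 * Real.pi) ^ ((n : ℝ)/2) * V * (C * Lint n (k * C)) := by ring
        _ = A * FermionAux.F n k C := by rw [hrw, hA]; ring
        _ = ρ := h'
  obtain ⟨a, ha, hFa⟩ := FermionAux.F_small (n := n) hk (by positivity : (0:ℝ) < ρ / A)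
  obtain ⟨b, hb, hFb⟩ := FermionAux.F_large hn hk (ρ / A)
  have hab : a < b := by
    by_contra h
    push_neg at h
    have : FermionAux.F n k b ≤ FermionAux.F n k a :=
      (FermionAux.F_strictMono hk).monotoneOn (mem_Ioi.mpr hb) (mem_Ioi.mpr ha) h
    linarith
  have hcont : ContinuousOn (FermionAux.F n k) (Icc a b) := fun x hx =>
    (FermionAux.F_continuousAt hk (lt_of_lt_of_le ha hx.1)).continuousWithinAt
  obtain ⟨C, hCmem, hFC⟩ :=
    intermediate_value_Icc hab.le hcont (Set.mem_Icc.mpr ⟨hFa.le, hFb.le⟩)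
  have hCpos : 0 < C := lt_of_lt_of_le ha hCmem.1
  refine ⟨C, ⟨hCpos, (key C hCpos).mpr hFC⟩, ?_⟩
  rintro y ⟨hy, hyeq⟩
  exact (FermionAux.F_strictMono hk).injOn (mem_Ioi.mpr hy) (mem_Ioi.mpr hCpos)
    (((key y hy).mp hyeq).trans hFC.symm)
end
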